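/- For integers r2 > 4 and 0 < c < (r2 − 2)/2, there is no graph in which every vertex has degree r2 and every vertex is contained in exactly (r2−1)(r2−2)/2 + c triangles. -/

import Mathlib

open SimpleGraph Finset

/-- The K3-degree of a vertex: the number of triangles (3-cliques) of `G` containing `v`. -/
noncomputable def K3deg {V : Type*} (G : SimpleGraph V) (v : V) : ℕ :=
  {t : Finset V | G.IsNClique 3 t ∧ v ∈ t}.ncard

/-- The degree of a vertex, as the cardinality of its open neighbourhood. -/
noncomputable def deg {V : Type*} (G : SimpleGraph V) (v : V) : ℕ :=
  (G.neighborSet v).ncard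

/-- `G` has parameters `(r2, r3)`: every vertex has degree `r2` and K3-degree `r3`. -/
def HasParams {V : Type*} (G : SimpleGraph V) (r2 r3 : ℕ) : Prop :=
  ∀ v : V, deg G v = r2 ∧ K3deg G v = r3

namespace Stmt5Aux
set_option linter.unusedSectionVars false
set_option maxHeartbeats 1000000

variable {V : Type} [Fintype V] [DecidableEq V] (G : SimpleGraph V) [DecidableRel G.Adj]

/-- number of non-neighbours of `a` (other than `a` itself) inside `s` -/
def eb (a : V) (s : Finset V) : ℕ := (s.filter fun b => b ≠ a ∧ ¬ G.Adj a b).card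

/-- for adjacent `u v`: the number of neighbours of `v` that are not neighbours of `u` (nor `u`) -/
def dd (a b : V) : ℕ := eb G a (G.neighborFinset b)

def K2 (v : V) : ℕ := ∑ w ∈ G.neighborFinset v, dd G w v

def Yset (v u : V) : Finset V := (G.neighborFinset v).filter fun w => w ≠ u ∧ ¬ G.Adj u w

def Cset (v u : V) : Finset V := G.neighborFinset v ∩ G.neighborFinset u

lemma dd_eq_card_Y (u v : V) : dd G u v = (Yset G v u).card := rfl

lemma Cset_comm (u v : V) : Cset G v u = Cset G u v := Finset.inter_comm _ _

lemma mem_Yset {v u w : V} : w ∈ Yset G v u ↔ G.Adj v w ∧ w ≠ u ∧ ¬ G.Adj u w := by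
  simp [Yset, SimpleGraph.mem_neighborFinset, and_assoc]

lemma mem_Cset {v u w : V} : w ∈ Cset G v u ↔ G.Adj v w ∧ G.Adj u w := by
  simp [Cset, SimpleGraph.mem_neighborFinset]

lemma Yset_disjoint_Cset (v u : V) : Disjoint (Yset G v u) (Cset G v u) := by
  rw [Finset.disjoint_left]
  intro w hw hw'
  rw [mem_Yset] at hw
  rw [mem_Cset] at hw'
  exact hw.2.2 hw'.2

lemma u_notmem_Yset (v u : V) : u ∉ Yset G v u := by
  rw [mem_Yset]; rintro ⟨-, h, -⟩; exact h rfl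

lemma u_notmem_Cset (v u : V) : u ∉ Cset G v u := by
  rw [mem_Cset]; rintro ⟨-, h⟩; exact G.loopless.irrefl u h

/-- partition of the neighbourhood of `v` along a neighbour `u` -/
lemma nb_partition {v u : V} (h : G.Adj v u) :
    G.neighborFinset v = {u} ∪ Yset G v u ∪ Cset G v u := by
  ext w
  simp only [Finset.mem_union, Finset.mem_singleton, mem_Yset, mem_Cset,
    SimpleGraph.mem_neighborFinset]
  constructor
  · intro hw
    by_cases hwu : w = u
    · exact Or.inl (Or.inl hwu)
    · by_cases hadj : G.Adj u w
      · exact Or.inr ⟨hw, hadj⟩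
      · exact Or.inl (Or.inr ⟨hw, hwu, hadj⟩)
  · rintro (( rfl | ⟨hw, -, -⟩) | ⟨hw, -⟩)
    · exact h
    · exact hw
    · exact hw

lemma eb_union {a : V} {s t : Finset V} (h : Disjoint s t) :
    eb G a (s ∪ t) = eb G a s + eb G a t := by
  unfold eb
  rw [Finset.filter_union, Finset.card_union_of_disjoint (Finset.disjoint_filter_filter h)]

lemma eb_singleton_one {a b : V} (h1 : b ≠ a) (h2 : ¬ G.Adj a b) : eb G a {b} = 1 := by
  unfold eb
  rw [Finset.filter_singleton, if_pos ⟨h1, h2⟩, Finset.card_singleton]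

lemma eb_singleton_zero {a b : V} (h2 : G.Adj a b) : eb G a {b} = 0 := by
  unfold eb
  rw [Finset.filter_singleton, if_neg (by tauto), Finset.card_empty]

lemma eb_le_card (a : V) (s : Finset V) : eb G a s ≤ s.card :=
  Finset.card_filter_le _ _

lemma eb_eq_zero_iff {a : V} {s : Finset V} :
    eb G a s = 0 ↔ ∀ b ∈ s, b ≠ a → G.Adj a b := by
  unfold eb
  rw [Finset.card_eq_zero, Finset.filter_eq_empty_iff]
  constructor
  · intro h b hb hba
    by_contra hadj
    exact h hb ⟨hba, hadj⟩
  · rintro h b hb ⟨hba, hadj⟩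
    exact hadj (h b hb hba)

lemma disjoint_singleton_Y (v u : V) : Disjoint ({u} : Finset V) (Yset G v u) := by
  simp only [Finset.disjoint_left, Finset.mem_singleton]
  rintro w rfl
  exact u_notmem_Yset G v w

lemma disjoint_singleton_YC (v u : V) :
    Disjoint ({u} : Finset V) (Yset G v u ∪ Cset G v u) := by
  rw [Finset.disjoint_union_right]
  refine ⟨disjoint_singleton_Y G v u, ?_⟩
  simp only [Finset.disjoint_left, Finset.mem_singleton]
  rintro w rfl
  exact u_notmem_Cset G v w

lemma disjoint_sY_C (v u : V) :
    Disjoint (({u} : Finset V) ∪ Yset G v u) (Cset G v u) := by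
  rw [Finset.disjoint_union_left]
  refine ⟨?_, Yset_disjoint_Cset G v u⟩
  simp only [Finset.disjoint_left, Finset.mem_singleton]
  rintro w rfl
  exact u_notmem_Cset G v w

/-- `dd a v`, split along the partition of the neighbourhood of `v` -/
lemma dd_split {v u : V} (h : G.Adj v u) (a : V) :
    dd G a v = eb G a {u} + eb G a (Yset G v u) + eb G a (Cset G v u) := by
  unfold dd
  rw [nb_partition G h, eb_union G (disjoint_sY_C G v u), eb_union G (disjoint_singleton_Y G v u)]

lemma card_nb_split {v u : V} (h : G.Adj v u) :
    (G.neighborFinset v).card = 1 + dd G u v + (Cset G v u).card := by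
  rw [nb_partition G h, Finset.card_union_of_disjoint (disjoint_sY_C G v u),
    Finset.card_union_of_disjoint (disjoint_singleton_Y G v u),
    Finset.card_singleton, dd_eq_card_Y]

lemma dd_comm {r : ℕ} (hreg : ∀ w, (G.neighborFinset w).card = r) {u v : V}
    (h : G.Adj u v) : dd G u v = dd G v u := by
  have h1 := card_nb_split G h.symm
  have h2 := card_nb_split G h
  rw [hreg] at h1 h2
  rw [Cset_comm] at h1
  omega

lemma sum_split {v u : V} (h : G.Adj v u) (f : V → ℕ) :
    ∑ w ∈ G.neighborFinset v, f w
      = f u + ∑ w ∈ Yset G v u, f w + ∑ w ∈ Cset G v u, f w := by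
  rw [nb_partition G h, Finset.sum_union (disjoint_sY_C G v u),
    Finset.sum_union (disjoint_singleton_Y G v u), Finset.sum_singleton]

lemma double_count {α β : Type} (s : Finset α) (t : Finset β)
    (R : α → β → Prop) [∀ a b, Decidable (R a b)] :
    ∑ a ∈ s, (t.filter fun b => R a b).card = ∑ b ∈ t, (s.filter fun a => R a b).card := by
  simp only [Finset.card_filter]
  exact Finset.sum_comm

lemma sum_eb_comm (s t : Finset V) :
    ∑ a ∈ s, eb G a t = ∑ b ∈ t, eb G b s := by
  unfold eb
  rw [double_count s t (fun a b => b ≠ a ∧ ¬ G.Adj a b)]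
  refine Finset.sum_congr rfl fun b _ => ?_
  apply congrArg
  apply Finset.filter_congr
  intro a _
  constructor
  · rintro ⟨h1, h2⟩; exact ⟨h1.symm, fun h => h2 h.symm⟩
  · rintro ⟨h1, h2⟩; exact ⟨h1.symm, fun h => h2 h.symm⟩

lemma sum_adj_comm (s t : Finset V) :
    ∑ a ∈ s, (G.neighborFinset a ∩ t).card = ∑ b ∈ t, (G.neighborFinset b ∩ s).card := by
  have h1 : ∀ (a : V) (w : Finset V),
      G.neighborFinset a ∩ w = w.filter (fun b => G.Adj a b) := by
    intro a w
    ext b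
    simp [SimpleGraph.mem_neighborFinset, and_comm]
  simp only [h1]
  rw [double_count s t (fun a b => G.Adj a b)]
  refine Finset.sum_congr rfl fun b _ => ?_
  apply congrArg
  apply Finset.filter_congr
  intro a _
  constructor
  · exact fun h => h.symm
  · exact fun h => h.symm

lemma claimP {a b w : V} (hab : G.Adj a b)
    (hY : ∀ y, G.Adj b y → y ≠ a → ¬ G.Adj a y → G.Adj w y) :
    dd G a w = dd G a b
      + ((G.neighborFinset w).filter fun z => ¬ G.Adj b z ∧ z ≠ b ∧ z ≠ a ∧ ¬ G.Adj a z).card := by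
  unfold dd eb
  rw [← Finset.card_union_of_disjoint]
  · apply congrArg
    ext z
    simp only [Finset.mem_union, Finset.mem_filter, SimpleGraph.mem_neighborFinset]
    constructor
    · rintro ⟨hwz, hza, haz⟩
      by_cases hbz : G.Adj b z
      · exact Or.inl ⟨hbz, hza, haz⟩
      · refine Or.inr ⟨hwz, hbz, ?_, hza, haz⟩
        rintro rfl
        exact haz hab
    · rintro (⟨hbz, hza, haz⟩ | ⟨hwz, -, -, hza, haz⟩)
      · exact ⟨hY z hbz hza haz, hza, haz⟩
      · exact ⟨hwz, hza, haz⟩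
  · rw [Finset.disjoint_left]
    simp only [Finset.mem_filter, SimpleGraph.mem_neighborFinset]
    rintro z ⟨hbz, -⟩ ⟨-, hbz', -⟩
    exact hbz' hbz

lemma mu_sum {r : ℕ} (hreg : ∀ w, (G.neighborFinset w).card = r) (u : V) :
    ∑ b ∈ univ.filter (fun b => b ≠ u ∧ ¬ G.Adj u b),
      (G.neighborFinset u ∩ G.neighborFinset b).card = K2 G u := by
  unfold K2
  have h1 : ∀ w ∈ G.neighborFinset u, dd G w u = dd G u w := by
    intro w hw
    exact dd_comm G hreg ((G.mem_neighborFinset ..).1 hw).symm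
  rw [Finset.sum_congr rfl h1]
  have h2 : ∀ w : V, dd G u w
      = ((univ.filter (fun b => b ≠ u ∧ ¬ G.Adj u b)).filter (fun b => G.Adj w b)).card := by
    intro w
    unfold dd eb
    apply congrArg
    ext b
    simp only [Finset.mem_filter, SimpleGraph.mem_neighborFinset, Finset.mem_univ, true_and]
    tauto
  simp only [h2]
  rw [double_count]
  refine Finset.sum_congr rfl fun b _ => ?_
  apply congrArg
  ext w
  simp only [Finset.mem_filter, Finset.mem_inter, SimpleGraph.mem_neighborFinset]
  constructor
  · rintro ⟨h1', h2'⟩; exact ⟨h1', h2'.symm⟩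
  · rintro ⟨h1', h2'⟩; exact ⟨h1', h2'.symm⟩

lemma A2_eq (v : V) :
    ∑ w ∈ G.neighborFinset v, (G.neighborFinset v ∩ G.neighborFinset w).card
      = 2 * K3deg G v := by
  classical
  set nbv := G.neighborFinset v with hnbv
  set P : Finset (V × V) := (nbv ×ˢ nbv).filter (fun p => G.Adj p.1 p.2) with hP
  set Tv : Finset (Finset V) := univ.filter (fun t : Finset V => G.IsNClique 3 t ∧ v ∈ t) with hTv
  have hK3 : K3deg G v = Tv.card := by
    rw [K3deg, Set.ncard_eq_toFinset_card']
    apply congrArg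
    ext t
    simp [Set.mem_toFinset, hTv]
  have hstep1 : ∑ w ∈ nbv, (nbv ∩ G.neighborFinset w).card = P.card := by
    have : ∀ w, nbv ∩ G.neighborFinset w = nbv.filter (fun b => G.Adj w b) := by
      intro w
      ext b
      simp [SimpleGraph.mem_neighborFinset, and_comm]
    simp only [this]
    rw [hP]
    rw [Finset.card_filter]
    rw [Finset.sum_product]
    simp only [Finset.card_filter]
  have hmem : ∀ p ∈ P, insert v {p.1, p.2} ∈ Tv := by
    rintro ⟨a, b⟩ hp
    simp only [hP, Finset.mem_filter, Finset.mem_product, hnbv,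
      SimpleGraph.mem_neighborFinset] at hp
    obtain ⟨⟨ha, hb⟩, hab⟩ := hp
    simp only [hTv, Finset.mem_filter, Finset.mem_univ, true_and]
    constructor
    · exact SimpleGraph.is3Clique_triple_iff.2 ⟨ha, hb, hab⟩
    · exact Finset.mem_insert_self _ _
  have hfiber : ∀ t ∈ Tv, (P.filter (fun p => insert v {p.1, p.2} = t)).card = 2 := by
    intro t ht
    simp only [hTv, Finset.mem_filter, Finset.mem_univ, true_and] at ht
    obtain ⟨hcl, hv⟩ := ht
    have hec : (t.erase v).card = 2 := by
      rw [Finset.card_erase_of_mem hv, hcl.card_eq]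
    obtain ⟨a, b, hab, he⟩ := Finset.card_eq_two.1 hec
    have haT : a ∈ t.erase v := by rw [he]; exact Finset.mem_insert_self _ _
    have hbT : b ∈ t.erase v := by rw [he]; simp
    have hav : a ≠ v := (Finset.mem_erase.1 haT).1
    have hbv : b ≠ v := (Finset.mem_erase.1 hbT).1
    have haT' : a ∈ t := (Finset.mem_erase.1 haT).2
    have hbT' : b ∈ t := (Finset.mem_erase.1 hbT).2
    have hadjva : G.Adj v a := hcl.1 (by exact_mod_cast hv) (by exact_mod_cast haT') hav.symm
    have hadjvb : G.Adj v b := hcl.1 (by exact_mod_cast hv) (by exact_mod_cast hbT') hbv.symm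
    have hadjab : G.Adj a b := hcl.1 (by exact_mod_cast haT') (by exact_mod_cast hbT') hab
    have hins : insert v {a, b} = t := by
      rw [← he, Finset.insert_erase hv]
    have hset : P.filter (fun p => insert v {p.1, p.2} = t) = {(a, b), (b, a)} := by
      ext ⟨x, y⟩
      simp only [Finset.mem_filter, hP, Finset.mem_product, Finset.mem_insert,
        Finset.mem_singleton, hnbv, SimpleGraph.mem_neighborFinset, Prod.mk.injEq]
      constructor
      · rintro ⟨⟨⟨hx, hy⟩, hxy⟩, hins'⟩
        have hxv : x ≠ v := hx.ne'
        have hyv : y ≠ v := hy.ne'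
        have hxt : x ∈ t.erase v := by
          rw [Finset.mem_erase]
          refine ⟨hxv, ?_⟩
          rw [← hins']
          simp
        have hyt : y ∈ t.erase v := by
          rw [Finset.mem_erase]
          refine ⟨hyv, ?_⟩
          rw [← hins']
          simp
        rw [he] at hxt hyt
        simp only [Finset.mem_insert, Finset.mem_singleton] at hxt hyt
        have hxyne : x ≠ y := hxy.ne
        rcases hxt with rfl | rfl
        · rcases hyt with rfl | rfl
          · exact absurd rfl hxyne
          · exact Or.inl ⟨rfl, rfl⟩
        · rcases hyt with rfl | rfl
          · exact Or.inr ⟨rfl, rfl⟩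
          · exact absurd rfl hxyne
      · rintro (⟨rfl, rfl⟩ | ⟨rfl, rfl⟩)
        · exact ⟨⟨⟨hadjva, hadjvb⟩, hadjab⟩, hins⟩
        · refine ⟨⟨⟨hadjvb, hadjva⟩, hadjab.symm⟩, ?_⟩
          rw [Finset.pair_comm]
          exact hins
    rw [hset]
    rw [Finset.card_insert_of_notMem, Finset.card_singleton]
    simp only [Finset.mem_singleton, Prod.mk.injEq]
    rintro ⟨rfl, -⟩
    exact hab rfl
  have hPcard : P.card = 2 * Tv.card := by
    rw [Finset.card_eq_sum_card_fiberwise hmem]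
    rw [Finset.sum_congr rfl hfiber, Finset.sum_const, smul_eq_mul, mul_comm]
  rw [hstep1, hPcard, hK3]


lemma K2_add (v : V) {r : ℕ} (hreg : ∀ w, (G.neighborFinset w).card = r) :
    K2 G v + r + 2 * K3deg G v = r * r := by
  have key : ∀ w ∈ G.neighborFinset v,
      dd G w v + (1 + (G.neighborFinset v ∩ G.neighborFinset w).card) = r := by
    intro w hw
    have h := card_nb_split G ((G.mem_neighborFinset ..).1 hw)
    rw [hreg] at h
    unfold Cset at h
    omega
  have hsum : ∑ w ∈ G.neighborFinset v,
      (dd G w v + (1 + (G.neighborFinset v ∩ G.neighborFinset w).card)) = r * r := by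
    rw [Finset.sum_congr rfl key, Finset.sum_const, hreg, smul_eq_mul]
  rw [Finset.sum_add_distrib, Finset.sum_add_distrib, Finset.sum_const, hreg,
    smul_eq_mul, mul_one, A2_eq] at hsum
  unfold K2
  omega

/-- decomposition of `K2 v` along the partition `{u} ∪ Y ∪ C` of `N(v)` -/
lemma K2_split {v u : V} (hadj : G.Adj v u) :
    K2 G v = dd G u v
      + (dd G u v + (∑ y ∈ Yset G v u, eb G y (Yset G v u))
          + (∑ y ∈ Yset G v u, eb G y (Cset G v u)))
      + ((∑ c ∈ Cset G v u, eb G c (Yset G v u))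
          + (∑ c ∈ Cset G v u, eb G c (Cset G v u))) := by
  unfold K2
  rw [sum_split G hadj]
  have hY : ∀ y ∈ Yset G v u, dd G y v = 1 + eb G y (Yset G v u) + eb G y (Cset G v u) := by
    intro y hy
    rw [mem_Yset] at hy
    rw [dd_split G hadj, eb_singleton_one G (fun h => hy.2.1 h.symm)
      (fun h => hy.2.2 h.symm)]
  have hC : ∀ c ∈ Cset G v u, dd G c v = eb G c (Yset G v u) + eb G c (Cset G v u) := by
    intro c hc
    rw [mem_Cset] at hc
    rw [dd_split G hadj, eb_singleton_zero G hc.2.symm]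
    omega
  rw [Finset.sum_congr rfl hY, Finset.sum_congr rfl hC]
  rw [Finset.sum_add_distrib, Finset.sum_add_distrib, Finset.sum_add_distrib,
    Finset.sum_const, smul_eq_mul, mul_one, ← dd_eq_card_Y]


lemma sum_eq_card_forces {s : Finset V} {f : V → ℕ} (h1 : ∀ x ∈ s, 1 ≤ f x)
    (h2 : ∑ x ∈ s, f x = s.card) : ∀ x ∈ s, f x = 1 := by
  intro x hx
  by_contra hne
  have h3 : ∑ y ∈ s, (1 : ℕ) < ∑ y ∈ s, f y :=
    Finset.sum_lt_sum h1 ⟨x, hx, by have := h1 x hx; omega⟩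
  rw [Finset.sum_const, smul_eq_mul, mul_one] at h3
  omega

lemma branch_eq2 {r c : ℕ} (hreg : ∀ w, (G.neighborFinset w).card = r)
    (hK2 : ∀ w, K2 G w + 2 * c + 2 = 2 * r)
    (hc1 : 1 ≤ c)
    {v u : V} (hadj : G.Adj v u) (hD : dd G u v = 2)
    (hmax : ∀ a b, G.Adj a b → dd G a b ≤ 2) : False := by
  set Y := Yset G v u with hYdef
  set X := Yset G u v with hXdef
  set C := Cset G v u with hCdef
  -- basic cardinalities
  have hDvu : dd G v u = 2 := by rw [← dd_comm G hreg hadj.symm]; exact hD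
  have hYcard : Y.card = 2 := by rw [hYdef, ← dd_eq_card_Y]; exact hD
  have hXcard : X.card = 2 := by rw [hXdef, ← dd_eq_card_Y]; exact hDvu
  have hrC : r = 3 + C.card := by
    have h := card_nb_split G hadj
    rw [hreg, hD, ← hCdef] at h
    omega
  -- the two K2 decompositions
  have hK2v : K2 G v = 2 + (2 + (∑ y ∈ Y, eb G y Y) + (∑ y ∈ Y, eb G y C))
      + ((∑ c' ∈ C, eb G c' Y) + (∑ c' ∈ C, eb G c' C)) := by
    have := K2_split G hadj
    rw [hD, ← hCdef, ← hYdef] at this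
    exact this
  have hK2u : K2 G u = 2 + (2 + (∑ x ∈ X, eb G x X) + (∑ x ∈ X, eb G x C))
      + ((∑ c' ∈ C, eb G c' X) + (∑ c' ∈ C, eb G c' C)) := by
    have := K2_split G hadj.symm
    rw [hDvu, ← Cset_comm G u v, ← hCdef, ← hXdef] at this
    exact this
  -- good and bad vertices of C
  set GD := C.filter (fun c' => eb G c' Y = 0) with hGDdef
  set B := C.filter (fun c' => ¬ eb G c' Y = 0) with hBdef
  have hGDB : GD.card + B.card = C.card := Finset.card_filter_add_card_filter_not _
  -- facts about good vertices
  have hgood : ∀ c' ∈ GD, dd G c' v + eb G c' X = 2 := by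
    intro c' hc'
    rw [hGDdef, Finset.mem_filter] at hc'
    obtain ⟨hcC, hcY0⟩ := hc'
    rw [hCdef, mem_Cset] at hcC
    obtain ⟨hvc, huc⟩ := hcC
    have hcY : ∀ y ∈ Y, y ≠ c' → G.Adj c' y := (eb_eq_zero_iff G).1 hcY0
    have hYC_disj := Yset_disjoint_Cset G v u
    have hcmemC : c' ∈ C := by rw [hCdef, mem_Cset]; exact ⟨hvc, huc⟩
    have hYadj : ∀ y, G.Adj v y → y ≠ u → ¬ G.Adj u y → G.Adj c' y := by
      intro y h1 h2 h3
      have hyY : y ∈ Y := by rw [hYdef, mem_Yset]; exact ⟨h1, h2, h3⟩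
      have hyc : y ≠ c' := by
        rintro rfl
        exact (Finset.disjoint_left.1 hYC_disj) hyY hcmemC
      exact hcY y hyY hyc
    -- instance (i): dd u c' = 2
    have hP1 := claimP G (a := u) (b := v) (w := c') hadj.symm hYadj
    have hle1 : dd G u c' ≤ 2 := hmax u c' huc
    rw [hD] at hP1
    have hduc : dd G u c' = 2 := by omega
    -- instance (ii): dd c' u = dd c' v + eb c' X
    have hYadj2 : ∀ y, G.Adj v y → y ≠ c' → ¬ G.Adj c' y → G.Adj u y := by
      intro y h1 h2 h3
      by_cases hyu : y = u
      · subst hyu; exact absurd huc.symm h3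
      · by_cases hadjuy : G.Adj u y
        · exact hadjuy
        · exact absurd (hYadj y h1 hyu hadjuy) h3
    have hP2 := claimP G (a := c') (b := v) (w := u) hvc.symm hYadj2
    have hextra : ((G.neighborFinset u).filter
        fun z => ¬ G.Adj v z ∧ z ≠ v ∧ z ≠ c' ∧ ¬ G.Adj c' z).card
        = eb G c' X := by
      unfold eb
      apply congrArg
      ext z
      simp only [Finset.mem_filter, hXdef, mem_Yset, SimpleGraph.mem_neighborFinset]
      constructor
      · rintro ⟨h1, h2, h3, h4, h5⟩
        exact ⟨⟨h1, h3, h2⟩, h4, h5⟩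
      · rintro ⟨⟨h1, h3, h2⟩, h4, h5⟩
        exact ⟨h1, h2, h3, h4, h5⟩
    rw [hextra] at hP2
    have hcu : dd G c' u = 2 := by
      rw [dd_comm G hreg huc.symm]
      exact hduc
    omega
  -- bad vertices have dd ≥ 1
  have hbad : ∀ c' ∈ B, 1 ≤ dd G c' v := by
    intro c' hc'
    rw [hBdef, Finset.mem_filter] at hc'
    have h := dd_split G hadj c'
    rw [← hYdef, ← hCdef] at h
    have := hc'.2
    omega
  -- link Σ_C dd to its decomposition
  have hCdd : ∑ c' ∈ C, dd G c' v
      = (∑ c' ∈ C, eb G c' Y) + (∑ c' ∈ C, eb G c' C) := by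
    rw [← Finset.sum_add_distrib]
    apply Finset.sum_congr rfl
    intro c' hc'
    rw [hCdef, mem_Cset] at hc'
    have h := dd_split G hadj c'
    rw [← hYdef, ← hCdef, eb_singleton_zero G hc'.2.symm] at h
    omega
  -- sum identities
  have hCsum : ∑ c' ∈ C, dd G c' v
      = (∑ c' ∈ GD, dd G c' v) + (∑ c' ∈ B, dd G c' v) := by
    rw [hGDdef, hBdef, Finset.sum_filter_add_sum_filter_not]
  have hGDsum : (∑ c' ∈ GD, dd G c' v) + (∑ c' ∈ GD, eb G c' X) = 2 * GD.card := by
    rw [← Finset.sum_add_distrib, Finset.sum_congr rfl hgood, Finset.sum_const,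
      smul_eq_mul, mul_comm]
  have hSB : B.card ≤ ∑ c' ∈ B, dd G c' v := by
    have := Finset.card_nsmul_le_sum B (fun c' => dd G c' v) 1 hbad
    simpa using this
  have hSCY : (∑ c' ∈ C, eb G c' Y) = ∑ c' ∈ B, eb G c' Y := by
    rw [← Finset.sum_filter_add_sum_filter_not C (fun c' => eb G c' Y = 0)]
    rw [← hGDdef, ← hBdef]
    have : ∑ c' ∈ GD, eb G c' Y = 0 := by
      apply Finset.sum_eq_zero
      intro c' hc'
      rw [hGDdef, Finset.mem_filter] at hc'
      exact hc'.2
    omega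
  have hSCY_ge : B.card ≤ ∑ c' ∈ C, eb G c' Y := by
    rw [hSCY]
    have := Finset.card_nsmul_le_sum B (fun c' => eb G c' Y) 1 ?_
    · simpa using this
    · intro c' hc'
      rw [hBdef, Finset.mem_filter] at hc'
      show (1:ℕ) ≤ eb G c' Y
      omega
  have hYCcomm : (∑ y ∈ Y, eb G y C) = ∑ c' ∈ C, eb G c' Y := sum_eb_comm G Y C
  have hXCcomm : (∑ x ∈ X, eb G x C) = ∑ c' ∈ C, eb G c' X := sum_eb_comm G X C
  have hSGXsplit : (∑ c' ∈ GD, eb G c' X) + (∑ c' ∈ B, eb G c' X)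
      = ∑ c' ∈ C, eb G c' X := by
    rw [hGDdef, hBdef, Finset.sum_filter_add_sum_filter_not]
  -- x capacity
  have hXcap : 2 + (∑ x ∈ X, eb G x X) + (∑ x ∈ X, eb G x C) ≤ 4 := by
    have hsum : ∑ x ∈ X, dd G x u
        = (∑ x ∈ X, (1 + eb G x X + eb G x C)) := by
      apply Finset.sum_congr rfl
      intro x hx
      rw [hXdef, mem_Yset] at hx
      have h := dd_split G hadj.symm x
      rw [← Cset_comm G u v, ← hCdef, ← hXdef,
        eb_singleton_one G (fun h' => hx.2.1 h'.symm) (fun h' => hx.2.2 h'.symm)] at h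
      exact h
    have hle : ∑ x ∈ X, dd G x u ≤ 4 := by
      have := Finset.sum_le_card_nsmul X (fun x => dd G x u) 2 ?_
      · rw [hXcard] at this
        simpa using this
      · intro x hx
        rw [hXdef, mem_Yset] at hx
        exact hmax x u hx.1.symm
    rw [hsum, Finset.sum_add_distrib, Finset.sum_add_distrib, Finset.sum_const,
      hXcard, smul_eq_mul, mul_one] at hle
    omega
  -- the master computation
  have hK2veq := hK2 v
  have hK2ueq := hK2 u
  have hBcard : B.card = 2 ∧ (∑ c' ∈ B, dd G c' v) = B.card
      ∧ (∑ c' ∈ B, eb G c' X) = 0 := by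
    clear_value B GD X C Y
    omega
  -- extract a bad vertex
  have hBne : B.Nonempty := by
    rw [← Finset.card_pos]
    omega
  obtain ⟨c', hc'B⟩ := hBne
  have hc'1 : dd G c' v = 1 := by
    refine sum_eq_card_forces hbad ?_ c' hc'B
    rw [hBcard.2.1]
  have hc'X : eb G c' X = 0 :=
    (Finset.sum_eq_zero_iff).1 hBcard.2.2 c' hc'B
  have hc'C : c' ∈ C := by
    rw [hBdef, Finset.mem_filter] at hc'B
    exact hc'B.1
  rw [hCdef, mem_Cset] at hc'C
  obtain ⟨hvc, huc⟩ := hc'C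
  -- the kill: dd v c' ≥ 2 but dd c' v = 1
  have hsub : X ⊆ (G.neighborFinset c').filter (fun z => z ≠ v ∧ ¬ G.Adj v z) := by
    intro x hx
    have hx' := hx
    rw [hXdef, mem_Yset] at hx'
    obtain ⟨hux, hxv, hnvx⟩ := hx'
    have hxc : x ≠ c' := by
      rintro rfl
      exact hnvx hvc
    have hadjcx : G.Adj c' x := (eb_eq_zero_iff G).1 hc'X x hx hxc
    rw [Finset.mem_filter, SimpleGraph.mem_neighborFinset]
    exact ⟨hadjcx, hxv, hnvx⟩
  have hge : 2 ≤ dd G v c' := by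
    have := Finset.card_le_card hsub
    rw [hXcard] at this
    exact this
  have : dd G v c' = dd G c' v := dd_comm G hreg hvc
  omega


lemma eb_compl {a : V} {s : Finset V} (ha : a ∉ s) :
    (s ∩ G.neighborFinset a).card + eb G a s = s.card := by
  unfold eb
  have h1 : s ∩ G.neighborFinset a = s.filter (fun b => G.Adj a b) := by
    ext b
    simp [SimpleGraph.mem_neighborFinset]
  have h2 : s.filter (fun b => b ≠ a ∧ ¬ G.Adj a b) = s.filter (fun b => ¬ G.Adj a b) := by
    apply Finset.filter_congr
    intro b hb
    have : b ≠ a := by rintro rfl; exact ha hb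
    tauto
  rw [h1, h2, Finset.card_filter_add_card_filter_not]

lemma mu_y_split {v u y : V} (hadj : G.Adj v u) (hy : y ∈ Yset G v u) :
    (G.neighborFinset u ∩ G.neighborFinset y).card + eb G y (Cset G v u)
      = 1 + (Cset G v u).card + (G.neighborFinset y ∩ Yset G u v).card := by
  rw [mem_Yset] at hy
  obtain ⟨hvy, hyu, hnuy⟩ := hy
  have hpart := nb_partition G hadj.symm
  rw [hpart, Finset.union_inter_distrib_right, Finset.union_inter_distrib_right]
  rw [Finset.card_union_of_disjoint, Finset.card_union_of_disjoint]
  · have e1 : ({v} : Finset V) ∩ G.neighborFinset y = {v} := by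
      rw [Finset.singleton_inter_of_mem]
      rw [SimpleGraph.mem_neighborFinset]
      exact hvy.symm
    have e2 : (Yset G u v ∩ G.neighborFinset y).card
        = (G.neighborFinset y ∩ Yset G u v).card := by
      rw [Finset.inter_comm]
    have e3 : (Cset G u v ∩ G.neighborFinset y).card + eb G y (Cset G v u)
        = (Cset G v u).card := by
      rw [← Cset_comm]
      apply eb_compl
      intro hyC
      exact (Finset.disjoint_left.1 (Yset_disjoint_Cset G v u))
        (by rw [mem_Yset]; exact ⟨hvy, hyu, hnuy⟩) hyC
    rw [e1, e2, Finset.card_singleton]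
    omega
  · exact Disjoint.mono (Finset.inter_subset_left) (Finset.inter_subset_left)
      (disjoint_singleton_Y G u v)
  · refine Disjoint.mono ?_ (Finset.inter_subset_left) (disjoint_sY_C G u v)
    exact Finset.union_subset_union Finset.inter_subset_left Finset.inter_subset_left

lemma side_sum {v u : V} (hadj : G.Adj v u) :
    (∑ y ∈ Yset G v u, (G.neighborFinset u ∩ G.neighborFinset y).card)
      + (∑ y ∈ Yset G v u, eb G y (Cset G v u))
    = dd G u v + dd G u v * (Cset G v u).card
      + (∑ y ∈ Yset G v u, (G.neighborFinset y ∩ Yset G u v).card) := by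
  rw [← Finset.sum_add_distrib]
  rw [Finset.sum_congr rfl (fun y hy => mu_y_split G hadj hy)]
  rw [Finset.sum_add_distrib, Finset.sum_add_distrib, Finset.sum_const, Finset.sum_const,
    dd_eq_card_Y, smul_eq_mul, mul_one, smul_eq_mul]

lemma side_mu_le {v u : V} (hadj : G.Adj v u) {r : ℕ}
    (hreg : ∀ w, (G.neighborFinset w).card = r) :
    (∑ y ∈ Yset G v u, (G.neighborFinset u ∩ G.neighborFinset y).card) ≤ K2 G u := by
  rw [← mu_sum G hreg u]
  apply Finset.sum_le_sum_of_subset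
  intro y hy
  rw [mem_Yset] at hy
  rw [Finset.mem_filter]
  refine ⟨Finset.mem_univ _, ?_, hy.2.2⟩
  exact fun h => hy.2.1 h


lemma branch_ge3 {r c : ℕ} (hreg : ∀ w, (G.neighborFinset w).card = r)
    (hK2 : ∀ w, K2 G w + 2 * c + 2 = 2 * r)
    (hc1 : 1 ≤ c) {v u : V} (hadj : G.Adj v u) {D : ℕ} (hD : dd G u v = D)
    (hD3 : 3 ≤ D) : False := by
  set Y := Yset G v u with hYdef
  set X := Yset G u v with hXdef
  set C := Cset G v u with hCdef
  have hDvu : dd G v u = D := by rw [← dd_comm G hreg hadj.symm]; exact hD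
  have hYcard : Y.card = D := by rw [hYdef, ← dd_eq_card_Y]; exact hD
  have hXcard : X.card = D := by rw [hXdef, ← dd_eq_card_Y]; exact hDvu
  have hrC : r = 1 + D + C.card := by
    have h := card_nb_split G hadj
    rw [hreg, hD, ← hCdef] at h
    exact h
  have hK2v : K2 G v = D + (D + (∑ y ∈ Y, eb G y Y) + (∑ y ∈ Y, eb G y C))
      + ((∑ c' ∈ C, eb G c' Y) + (∑ c' ∈ C, eb G c' C)) := by
    have := K2_split G hadj
    rw [hD, ← hCdef, ← hYdef] at this
    exact this
  have hK2u : K2 G u = D + (D + (∑ x ∈ X, eb G x X) + (∑ x ∈ X, eb G x C))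
      + ((∑ c' ∈ C, eb G c' X) + (∑ c' ∈ C, eb G c' C)) := by
    have := K2_split G hadj.symm
    rw [hDvu, ← Cset_comm G u v, ← hCdef, ← hXdef] at this
    exact this
  have hYCcomm : (∑ y ∈ Y, eb G y C) = ∑ c' ∈ C, eb G c' Y := sum_eb_comm G Y C
  have hXCcomm : (∑ x ∈ X, eb G x C) = ∑ c' ∈ C, eb G c' X := sum_eb_comm G X C
  -- the two side computations
  have hS1 := side_sum G hadj
  rw [hD, ← hCdef, ← hYdef, ← hXdef] at hS1
  have hS2 := side_mu_le G hadj hreg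
  rw [← hYdef] at hS2
  have hS1' := side_sum G hadj.symm
  rw [hDvu, ← Cset_comm G u v, ← hCdef, ← hXdef, ← hYdef] at hS1'
  have hS2' := side_mu_le G hadj.symm hreg
  rw [← hXdef] at hS2'
  -- the cross sums agree
  have hcross : (∑ y ∈ Y, (G.neighborFinset y ∩ X).card)
      = ∑ x ∈ X, (G.neighborFinset x ∩ Y).card := sum_adj_comm G Y X
  -- numeric part
  have hK2veq := hK2 v
  have hK2ueq := hK2 u
  have hCc1 : 1 ≤ C.card := by omega
  have hquad : D + 3 * C.card ≤ D * C.card + 3 := by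
    obtain ⟨m1, hm1⟩ := Nat.exists_eq_add_of_le hCc1
    have hmul : 3 * m1 ≤ D * m1 := Nat.mul_le_mul_right m1 hD3
    rw [hm1, Nat.mul_add, Nat.mul_add, Nat.mul_one, Nat.mul_one]
    omega
  obtain ⟨Q, hQ⟩ : ∃ q, q = D * C.card := ⟨_, rfl⟩
  rw [← hQ] at hS1 hS1' hquad
  have hmain : (∑ y ∈ Y, (G.neighborFinset y ∩ X).card) = 0
      ∧ (∑ x ∈ X, (G.neighborFinset v ∩ G.neighborFinset x).card) = K2 G v := by
    omega
  -- v-side vanishing of mu outside X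
  have hvan : ∀ b ∈ (univ.filter (fun b => b ≠ v ∧ ¬ G.Adj v b)) \ X,
      (G.neighborFinset v ∩ G.neighborFinset b).card = 0 := by
    have hXsub : X ⊆ univ.filter (fun b => b ≠ v ∧ ¬ G.Adj v b) := by
      intro x hx
      rw [hXdef, mem_Yset] at hx
      rw [Finset.mem_filter]
      exact ⟨Finset.mem_univ _, (fun h => hx.2.1 h), hx.2.2⟩
    have hsdiff := Finset.sum_sdiff (f := fun b =>
      (G.neighborFinset v ∩ G.neighborFinset b).card) hXsub
    rw [mu_sum G hreg v] at hsdiff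
    have hsdiff2 : (∑ b ∈ (univ.filter (fun b => b ≠ v ∧ ¬ G.Adj v b)) \ X,
        (G.neighborFinset v ∩ G.neighborFinset b).card)
        + (∑ x ∈ X, (G.neighborFinset v ∩ G.neighborFinset x).card) = K2 G v := hsdiff
    have hzero : ∑ b ∈ (univ.filter (fun b => b ≠ v ∧ ¬ G.Adj v b)) \ X,
        (G.neighborFinset v ∩ G.neighborFinset b).card = 0 := by
      have := hmain.2
      omega
    exact fun b hb => (Finset.sum_eq_zero_iff).1 hzero b hb
  -- find the outside vertex o
  have hYne : Y.Nonempty := by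
    rw [← Finset.card_pos]
    omega
  obtain ⟨y, hyY⟩ := hYne
  have hy' := hyY
  rw [hYdef, mem_Yset] at hy'
  obtain ⟨hvy, hyu, hnuy⟩ := hy'
  have hnotsub : ¬ (G.neighborFinset y ⊆ {v} ∪ Y ∪ C) := by
    intro hsub
    have hy_not : y ∉ G.neighborFinset y := by
      rw [SimpleGraph.mem_neighborFinset]
      exact G.loopless.irrefl y
    have hsub2 : G.neighborFinset y ⊆ ({v} ∪ Y ∪ C).erase y :=
      Finset.subset_erase.2 ⟨hsub, hy_not⟩
    have hcard := Finset.card_le_card hsub2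
    rw [hreg, Finset.card_erase_of_mem] at hcard
    · have hle : ({v} ∪ Y ∪ C).card ≤ 1 + D + C.card := by
        calc ({v} ∪ Y ∪ C).card ≤ ({v} ∪ Y).card + C.card := Finset.card_union_le _ _
        _ ≤ (({v} : Finset V).card + Y.card) + C.card := by
            exact Nat.add_le_add_right (Finset.card_union_le _ _) _
        _ = 1 + D + C.card := by rw [Finset.card_singleton, hYcard]
      omega
    · exact Finset.mem_union_left _ (Finset.mem_union_right _ hyY)
  obtain ⟨o, hoy, honot⟩ := Finset.not_subset.1 hnotsub
  simp only [Finset.mem_union, Finset.mem_singleton, not_or] at honot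
  obtain ⟨⟨hov, hoY⟩, hoC⟩ := honot
  have hoadj : G.Adj y o := (G.mem_neighborFinset ..).1 hoy
  -- o is not adjacent to v
  have honv : ¬ G.Adj v o := by
    intro hadj'
    have : o ∈ G.neighborFinset v := by rw [SimpleGraph.mem_neighborFinset]; exact hadj'
    rw [nb_partition G hadj, ← hYdef, ← hCdef] at this
    simp only [Finset.mem_union, Finset.mem_singleton] at this
    rcases this with (rfl | hY') | hC'
    · exact hnuy hoadj.symm
    · exact hoY hY'
    · exact hoC hC'
  -- o is not in X
  have honX : o ∉ X := by
    intro hoX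
    have h0 : (G.neighborFinset y ∩ X).card = 0 :=
      (Finset.sum_eq_zero_iff).1 hmain.1 y hyY
    rw [Finset.card_eq_zero] at h0
    have : o ∈ G.neighborFinset y ∩ X := Finset.mem_inter.2 ⟨hoy, hoX⟩
    rw [h0] at this
    exact absurd this (Finset.notMem_empty o)
  -- contradiction via hvan
  have hob : o ∈ (univ.filter (fun b => b ≠ v ∧ ¬ G.Adj v b)) \ X := by
    rw [Finset.mem_sdiff, Finset.mem_filter]
    exact ⟨⟨Finset.mem_univ _, hov, honv⟩, honX⟩
  have h0 := hvan o hob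
  rw [Finset.card_eq_zero] at h0
  have hymem : y ∈ G.neighborFinset v ∩ G.neighborFinset o := by
    rw [Finset.mem_inter, SimpleGraph.mem_neighborFinset, SimpleGraph.mem_neighborFinset]
    exact ⟨hvy, hoadj.symm⟩
  rw [h0] at hymem
  exact absurd hymem (Finset.notMem_empty y)


lemma two_mul_choose_two (n : ℕ) : 2 * n.choose 2 = n * (n - 1) := by
  rcases n with _ | k
  · simp
  · rw [Nat.choose_two_right]
    have heven : Even ((k + 1) * (k + 1 - 1)) := by
      simp only [Nat.add_sub_cancel]
      rw [Nat.mul_comm]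
      exact Nat.even_mul_succ_self k
    obtain ⟨m, hm⟩ := heven
    omega

end Stmt5Aux

open Stmt5Aux in
theorem stmt5 (r2 c : ℕ) (hr2 : 4 < r2) (hc0 : 0 < c) (hc : 2 * c < r2 - 2) :
    ¬ ∃ (V : Type) (_ : Fintype V) (_ : Nonempty V) (G : SimpleGraph V),
      HasParams G r2 (Nat.choose (r2 - 1) 2 + c) := by
  rintro ⟨V, hfin, hne, G, hG⟩
  classical
  obtain ⟨v0⟩ := hne
  -- regularity
  have hreg : ∀ w, (G.neighborFinset w).card = r2 := by
    intro w
    have h := (hG w).1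
    rw [deg] at h
    rw [← h, SimpleGraph.neighborFinset_def, Set.ncard_eq_toFinset_card']
  -- value of K2
  have hK2c : ∀ w, K2 G w + 2 * c + 2 = 2 * r2 := by
    intro w
    have hadd := K2_add G w hreg
    have hk3 := (hG w).2
    rw [hk3, Nat.mul_add] at hadd
    obtain ⟨s, rfl⟩ : ∃ s, r2 = s + 2 := ⟨r2 - 2, by omega⟩
    have h2c : 2 * Nat.choose (s + 2 - 1) 2 = (s + 1) * s := by
      have := two_mul_choose_two (s + 1)
      simpa using this
    rw [h2c] at hadd
    have hring : (s + 2) * (s + 2) = (s + 1) * s + 3 * s + 4 := by ring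
    omega
  -- a maximal edge
  have hne0 : (G.neighborFinset v0).Nonempty := by
    rw [← Finset.card_pos, hreg]
    omega
  obtain ⟨w0, hw0⟩ := hne0
  have hEne : ((univ ×ˢ univ : Finset (V × V)).filter (fun p => G.Adj p.1 p.2)).Nonempty := by
    refine ⟨(v0, w0), ?_⟩
    rw [Finset.mem_filter]
    exact ⟨by simp, (G.mem_neighborFinset ..).1 hw0⟩
  obtain ⟨p0, hp0E, hp0max⟩ := Finset.exists_max_image _ (fun p => dd G p.2 p.1) hEne
  rw [Finset.mem_filter] at hp0E
  have hp0adj : G.Adj p0.1 p0.2 := hp0E.2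
  have hmax : ∀ a b, G.Adj a b → dd G a b ≤ dd G p0.2 p0.1 := by
    intro a b hab
    have hmem : (b, a) ∈ (univ ×ˢ univ : Finset (V × V)).filter (fun p => G.Adj p.1 p.2) := by
      rw [Finset.mem_filter]
      exact ⟨by simp, hab.symm⟩
    exact hp0max (b, a) hmem
  rcases Nat.lt_or_ge (dd G p0.2 p0.1) 2 with hD1 | hD2
  · -- all dd ≤ 1 : too few non-edges in neighbourhoods
    have hsum : K2 G v0 ≤ r2 := by
      have h := Finset.sum_le_card_nsmul (G.neighborFinset v0) (fun w => dd G w v0) 1 ?_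
      · rw [hreg, smul_eq_mul, mul_one] at h
        exact h
      · intro w hw
        have hadj : G.Adj w v0 := ((G.mem_neighborFinset ..).1 hw).symm
        have := hmax w v0 hadj
        show dd G w v0 ≤ 1
        omega
    have := hK2c v0
    omega
  · rcases Nat.lt_or_ge (dd G p0.2 p0.1) 3 with hD2' | hD3
    · exact branch_eq2 G hreg hK2c (by omega) hp0adj (by omega)
        (fun a b hab => le_trans (hmax a b hab) (by omega))
    · exact branch_ge3 G hreg hK2c (by omega) hp0adj rfl hD3
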